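/- Let f̄ : [0,2] → ℝ be a C¹ nondecreasing function with m = f̄(0), M = f̄(2), and let C = 1/sup_{r∈[0,2]} f̄'(r) (assuming sup f̄' > 0). For δ > 0 and u,v ∈ [m,M], define ψ^{δ,+}(u,v;r) = 1_{u > f̄(r)+δ, v < f̄(r)-δ} and ψ^{δ,-}(u,v;r) = 1_{u < f̄(r)-δ, v > f̄(r)+δ}. Then ∫₀² [ψ^{δ,+}(u,v;r) + ψ^{δ,-}(u,v;r)] dr ≥ C(|u-v| - 2δ). -/

import Mathlib

open MeasureTheory Set

lemma aux_kruzkov (f : ℝ → ℝ) (hf : ContDiff ℝ 1 f) (hmono : MonotoneOn f (Set.Icc 0 2))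
    (hsup : 0 < sSup ((fun r => deriv f r) '' Set.Icc (0:ℝ) 2))
    (δ : ℝ) (hδ : 0 < δ) (U V : ℝ) (hU : U ≤ f 2) (hV : f 0 ≤ V)
    (hUV : V + 2 * δ < U) :
    (1 / sSup ((fun r => deriv f r) '' Set.Icc (0:ℝ) 2)) * ((U - V) - 2 * δ) ≤
      ∫ r in (0:ℝ)..2, (if f r < U - δ ∧ V + δ < f r then (1:ℝ) else 0) := by
  set L := sSup ((fun r => deriv f r) '' Set.Icc (0:ℝ) 2) with hLdef
  have hcf : Continuous f := hf.continuous
  have hcd : Continuous (deriv f) := (hf.iterate_deriv' 0 1).continuous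
  have hbdd : BddAbove ((fun r => deriv f r) '' Set.Icc (0:ℝ) 2) :=
    (isCompact_Icc.image hcd).bddAbove
  have hderivle : ∀ x ∈ Set.Icc (0:ℝ) 2, deriv f x ≤ L :=
    fun x hx => le_csSup hbdd ⟨x, hx, rfl⟩
  -- Lipschitz-type bound
  have lip : ∀ x ∈ Set.Icc (0:ℝ) 2, ∀ y ∈ Set.Icc (0:ℝ) 2, x ≤ y →
      f y - f x ≤ L * (y - x) := by
    intro x hx y hy hxy
    exact (convex_Icc (0:ℝ) 2).image_sub_le_mul_sub_of_deriv_le hcf.continuousOn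
      ((hf.differentiable one_ne_zero).differentiableOn)
      (fun z hz => hderivle z (interior_subset hz)) x hx y hy hxy
  -- define a and b
  set S := {r : ℝ | r ∈ Set.Icc (0:ℝ) 2 ∧ f r ≤ V + δ} with hSdef
  set T := {r : ℝ | r ∈ Set.Icc (0:ℝ) 2 ∧ U - δ ≤ f r} with hTdef
  have hSne : S.Nonempty := ⟨0, ⟨le_refl 0, by norm_num⟩, by linarith⟩
  have hTne : T.Nonempty := ⟨2, ⟨by norm_num, le_refl 2⟩, by linarith⟩
  have hSbdd : BddAbove S := ⟨2, fun r hr => hr.1.2⟩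
  have hTbdd : BddBelow T := ⟨0, fun r hr => hr.1.1⟩
  have hSclosed : IsClosed S := by
    have : S = Set.Icc (0:ℝ) 2 ∩ f ⁻¹' Set.Iic (V + δ) := by
      ext r; simp [hSdef, Set.mem_Icc, and_assoc]
    rw [this]
    exact isClosed_Icc.inter (isClosed_Iic.preimage hcf)
  have hTclosed : IsClosed T := by
    have : T = Set.Icc (0:ℝ) 2 ∩ f ⁻¹' Set.Ici (U - δ) := by
      ext r; simp [hTdef, Set.mem_Icc, and_assoc]
    rw [this]
    exact isClosed_Icc.inter (isClosed_Ici.preimage hcf)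
  set a := sSup S with hadef
  set b := sInf T with hbdef
  have haS : a ∈ S := hSclosed.csSup_mem hSne hSbdd
  have hbT : b ∈ T := hTclosed.csInf_mem hTne hTbdd
  have ha02 : a ∈ Set.Icc (0:ℝ) 2 := haS.1
  have hb02 : b ∈ Set.Icc (0:ℝ) 2 := hbT.1
  have hfa : f a ≤ V + δ := haS.2
  have hfb : U - δ ≤ f b := hbT.2
  have hab : a < b := by
    by_contra h
    push_neg at h
    have := hmono hb02 ha02 h
    linarith
  -- above a, f > V + δ; below b, f < U - δ
  have hgt : ∀ r ∈ Set.Icc (0:ℝ) 2, a < r → V + δ < f r := by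
    intro r hr har
    by_contra h
    push_neg at h
    exact absurd (le_csSup hSbdd (⟨hr, h⟩ : r ∈ S)) (not_le.mpr har)
  have hlt : ∀ r ∈ Set.Icc (0:ℝ) 2, r < b → f r < U - δ := by
    intro r hr hrb
    by_contra h
    push_neg at h
    exact absurd (csInf_le hTbdd (⟨hr, h⟩ : r ∈ T)) (not_le.mpr hrb)
  -- length bound
  have hlen : (1 / L) * ((U - V) - 2 * δ) ≤ b - a := by
    have h1 : f b - f a ≤ L * (b - a) := lip a ha02 b hb02 hab.le
    have h2 : (U - V) - 2 * δ ≤ f b - f a := by linarith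
    rw [div_mul_eq_mul_div, one_mul, div_le_iff₀ hsup]
    calc (U - V) - 2*δ ≤ f b - f a := h2
      _ ≤ L * (b - a) := h1
      _ = (b - a) * L := mul_comm _ _
  -- integral comparison
  have hind : ∀ r : ℝ, (Set.Ioo a b).indicator (fun _ => (1:ℝ)) r ≤
      (if f r < U - δ ∧ V + δ < f r then (1:ℝ) else 0) := by
    intro r
    by_cases hr : r ∈ Set.Ioo a b
    · have hr02 : r ∈ Set.Icc (0:ℝ) 2 := ⟨le_trans ha02.1 hr.1.le, le_trans hr.2.le hb02.2⟩
      rw [Set.indicator_of_mem hr, if_pos ⟨hlt r hr02 hr.2, hgt r hr02 hr.1⟩]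
    · rw [Set.indicator_of_notMem hr]
      split_ifs <;> norm_num
  have hmeasind : Measurable fun r => (if f r < U - δ ∧ V + δ < f r then (1:ℝ) else 0) := by
    apply Measurable.ite _ measurable_const measurable_const
    exact (measurableSet_lt hcf.measurable measurable_const).inter
      (measurableSet_lt measurable_const hcf.measurable)
  have hint1 : IntervalIntegrable (fun r => (if f r < U - δ ∧ V + δ < f r then (1:ℝ) else 0))
      volume 0 2 := by
    apply IntervalIntegrable.mono_fun (intervalIntegrable_const (c := (1:ℝ)))
      hmeasind.aestronglyMeasurable
    filter_upwards with r
    split_ifs <;> simp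
  have hint2 : IntervalIntegrable ((Set.Ioo a b).indicator (fun _ => (1:ℝ))) volume 0 2 := by
    apply IntervalIntegrable.mono_fun (intervalIntegrable_const (c := (1:ℝ)))
    · exact (measurable_const.indicator measurableSet_Ioo).aestronglyMeasurable
    · filter_upwards with r
      rw [Real.norm_eq_abs, abs_of_nonneg (Set.indicator_nonneg (by norm_num) r)]
      simp [Set.indicator_apply]
      split_ifs <;> norm_num
  have hII : ∫ r in (0:ℝ)..2, (Set.Ioo a b).indicator (fun _ => (1:ℝ)) r ≤
      ∫ r in (0:ℝ)..2, (if f r < U - δ ∧ V + δ < f r then (1:ℝ) else 0) :=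
    intervalIntegral.integral_mono_on (by norm_num) hint2 hint1 (fun x _ => hind x)
  have hIeq : ∫ r in (0:ℝ)..2, (Set.Ioo a b).indicator (fun _ => (1:ℝ)) r = b - a := by
    rw [intervalIntegral.integral_of_le (by norm_num : (0:ℝ) ≤ 2),
      MeasureTheory.setIntegral_indicator measurableSet_Ioo]
    have hsub : Set.Ioc (0:ℝ) 2 ∩ Set.Ioo a b = Set.Ioo a b := by
      apply Set.inter_eq_right.mpr
      intro r hr
      exact ⟨lt_of_le_of_lt ha02.1 hr.1, le_trans hr.2.le hb02.2⟩
    rw [hsub, setIntegral_const, measureReal_def, Real.volume_Ioo, ENNReal.toReal_ofReal (by linarith)]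
    simp
  linarith [hII, hIeq ▸ hII]

theorem kruzkov_indicator_integral_bound
    (f : ℝ → ℝ) (hf : ContDiff ℝ 1 f) (hmono : MonotoneOn f (Set.Icc 0 2))
    (hsup : 0 < sSup ((fun r => deriv f r) '' Set.Icc (0:ℝ) 2))
    (δ : ℝ) (hδ : 0 < δ)
    (u v : ℝ) (hu : u ∈ Set.Icc (f 0) (f 2)) (hv : v ∈ Set.Icc (f 0) (f 2)) :
    (1 / sSup ((fun r => deriv f r) '' Set.Icc (0:ℝ) 2)) * (|u - v| - 2 * δ) ≤
      ∫ r in (0:ℝ)..2,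
        ((if f r + δ < u ∧ v < f r - δ then (1:ℝ) else 0) +
          (if u < f r - δ ∧ f r + δ < v then (1:ℝ) else 0)) := by
  set L := sSup ((fun r => deriv f r) '' Set.Icc (0:ℝ) 2) with hLdef
  rcases le_or_gt (|u - v|) (2 * δ) with hsmall | hbig
  · have h1 : (1 / L) * (|u - v| - 2 * δ) ≤ 0 := by
      apply mul_nonpos_of_nonneg_of_nonpos
      · positivity
      · linarith
    refine le_trans h1 (intervalIntegral.integral_nonneg (by norm_num) ?_)
    intro x _
    have : (0:ℝ) ≤ (if f x + δ < u ∧ v < f x - δ then (1:ℝ) else 0) := by positivity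
    have : (0:ℝ) ≤ (if u < f x - δ ∧ f x + δ < v then (1:ℝ) else 0) := by positivity
    positivity
  · rcases le_or_gt u v with huv | huv
    · -- v > u + 2δ
      have hvu : u + 2 * δ < v := by
        rw [abs_sub_comm, abs_of_nonneg (by linarith)] at hbig; linarith
      have heq : ∫ r in (0:ℝ)..2,
          ((if f r + δ < u ∧ v < f r - δ then (1:ℝ) else 0) +
            (if u < f r - δ ∧ f r + δ < v then (1:ℝ) else 0)) =
          ∫ r in (0:ℝ)..2, (if f r < v - δ ∧ u + δ < f r then (1:ℝ) else 0) := by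
        apply intervalIntegral.integral_congr
        intro r _
        have hz : ¬(f r + δ < u ∧ v < f r - δ) := by rintro ⟨h1, h2⟩; linarith
        simp only []; rw [if_neg hz, zero_add]
        exact if_congr ⟨fun ⟨h1, h2⟩ => ⟨by linarith, by linarith⟩,
          fun ⟨h1, h2⟩ => ⟨by linarith, by linarith⟩⟩ rfl rfl
      rw [heq, abs_sub_comm, abs_of_nonneg (by linarith)]
      exact aux_kruzkov f hf hmono hsup δ hδ v u hv.2 hu.1 (by linarith)
    · -- u > v + 2δ
      have hvu : v + 2 * δ < u := by
        rw [abs_of_nonneg (by linarith)] at hbig; linarith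
      have heq : ∫ r in (0:ℝ)..2,
          ((if f r + δ < u ∧ v < f r - δ then (1:ℝ) else 0) +
            (if u < f r - δ ∧ f r + δ < v then (1:ℝ) else 0)) =
          ∫ r in (0:ℝ)..2, (if f r < u - δ ∧ v + δ < f r then (1:ℝ) else 0) := by
        apply intervalIntegral.integral_congr
        intro r _
        have hz : ¬(u < f r - δ ∧ f r + δ < v) := by rintro ⟨h1, h2⟩; linarith
        simp only []; rw [if_neg hz, add_zero]
        exact if_congr ⟨fun ⟨h1, h2⟩ => ⟨by linarith, by linarith⟩,
          fun ⟨h1, h2⟩ => ⟨by linarith, by linarith⟩⟩ rfl rfl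
      rw [heq, abs_of_nonneg (by linarith)]
      exact aux_kruzkov f hf hmono hsup δ hδ u v hu.2 hv.1 (by linarith)
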